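/- The adjacency map ρ, which sends each reduced form of discriminant D to the unique reduced form of discriminant D adjacent to its right, is a bijection of the set of reduced forms of discriminant D onto itself; consequently the set of reduced forms of discriminant D is partitioned into cycles of adjacent forms (the orbits of ρ). (Proposition 1.) -/
import Mathlib


/-- The discriminant of the integral binary quadratic form `(a, b, c)`,
represented as the triple `f = (a, (b, c))`. -/
def disc (f : ℤ × ℤ × ℤ) : ℤ := f.2.1 ^ 2 - 4 * f.1 * f.2.2

/-- The form `(a, b, c)` of discriminant `D > 0` is reduced:
`|√D - 2|a|| < b < √D` (as real numbers). -/
def IsReducedForm (D : ℤ) (f : ℤ × ℤ × ℤ) : Prop :=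
  disc f = D ∧
  abs (Real.sqrt (D : ℝ) - 2 * |(f.1 : ℝ)|) < (f.2.1 : ℝ) ∧ (f.2.1 : ℝ) < Real.sqrt (D : ℝ)

/-- `g = (a₂, b₂, c₂)` is adjacent to the right of `f = (a₁, b₁, c₁)`:
both have discriminant `D`, `c₁ = a₂`, and `b₁ + b₂ ≡ 0 (mod 2 a₂)`. -/
def AdjRight (D : ℤ) (f g : ℤ × ℤ × ℤ) : Prop :=
  disc f = D ∧ disc g = D ∧ f.2.2 = g.1 ∧ (2 * g.1) ∣ (f.2.1 + g.2.1)

/-- Proposition 1: the adjacency map `ρ`, sending each reduced form of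
discriminant `D` to the (unique) reduced form adjacent to its right, is a
bijection of the set of reduced forms of discriminant `D` onto itself (hence
its orbits partition the reduced forms into cycles of adjacent forms). -/
private lemma sqrt_sq' (D : ℤ) (hD : 0 < D) : Real.sqrt (D : ℝ) ^ 2 = (D : ℝ) :=
  Real.sq_sqrt (by exact_mod_cast hD.le)

private lemma bsq_lt (D b : ℤ) (hD : 0 < D) (hb0 : 0 < (b:ℝ)) (hbs : (b:ℝ) < Real.sqrt D) :
    b ^ 2 < D := by
  have h : (b:ℝ)^2 < Real.sqrt (D:ℝ) ^ 2 := by nlinarith [Real.sqrt_nonneg (D:ℝ)]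
  rw [sqrt_sq' D hD] at h; exact_mod_cast h

private lemma ac_neg (D a b c : ℤ) (hD : 0 < D) (hdisc : b^2 - 4*a*c = D)
    (hb0 : 0 < (b:ℝ)) (hbs : (b:ℝ) < Real.sqrt D) : a * c < 0 := by
  have := bsq_lt D b hD hb0 hbs
  nlinarith

private lemma half (D a b c : ℤ) (hD : 0 < D) (hdisc : b^2 - 4*a*c = D)
    (hb0 : 0 < (b:ℝ)) (hbs : (b:ℝ) < Real.sqrt D) :
    abs (Real.sqrt D - 2*|(a:ℝ)|) < (b:ℝ) ↔ |(a:ℝ)| + |(c:ℝ)| < Real.sqrt D := by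
  set s := Real.sqrt (D:ℝ) with hs
  have hs2 : s^2 = (D:ℝ) := sqrt_sq' D hD
  have hac : a * c < 0 := ac_neg D a b c hD hdisc hb0 hbs
  have ha : a ≠ 0 := by rintro rfl; simp at hac
  have haR : (0:ℝ) < |(a:ℝ)| := by
    rw [abs_pos]; exact_mod_cast ha
  have habs : 4 * (|(a:ℝ)| * |(c:ℝ)|) = s^2 - (b:ℝ)^2 := by
    rw [← abs_mul]
    have : |(a:ℝ) * (c:ℝ)| = -((a:ℝ)*(c:ℝ)) := by
      apply abs_of_neg; exact_mod_cast hac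
    rw [this, hs2]
    have : ((b:ℝ))^2 - 4*(a:ℝ)*(c:ℝ) = (D:ℝ) := by exact_mod_cast hdisc
    linarith
  set A : ℝ := |(a:ℝ)| with hA
  set C : ℝ := |(c:ℝ)| with hC
  rw [abs_lt]
  constructor
  · rintro ⟨h1, h2⟩
    nlinarith [mul_pos (by linarith : (0:ℝ) < s + (b:ℝ) - 2*A)
      (by linarith : (0:ℝ) < (b:ℝ) - s + 2*A), haR, habs]
  · intro h
    have hprod : (0:ℝ) < (s + (b:ℝ) - 2*A) * ((b:ℝ) - s + 2*A) := by
      nlinarith [haR, habs]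
    constructor <;> nlinarith [hprod, hb0]

private lemma red_iff' (D a b c : ℤ) (hD : 0 < D) :
    IsReducedForm D (a, b, c) ↔
      disc (a, b, c) = D ∧ abs (Real.sqrt (D:ℝ) - 2*|(c:ℝ)|) < (b:ℝ) ∧
        (b:ℝ) < Real.sqrt (D:ℝ) := by
  unfold IsReducedForm
  refine and_congr_right fun hd => and_congr_left fun hbs => ?_
  have hdisc : b^2 - 4*a*c = D := by simpa [disc] using hd
  by_cases hb : 0 < (b:ℝ)
  · rw [half D a b c hD hdisc hb hbs, half D c b a hD (by linarith) hb hbs, add_comm]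
  · constructor <;> (intro h; exact absurd (lt_of_le_of_lt (abs_nonneg _) h) hb)

private lemma b_eq (D m b1 b2 : ℤ) (hm : m ≠ 0)
    (h1 : abs (Real.sqrt (D:ℝ) - 2*|(m:ℝ)|) < (b1:ℝ)) (h1s : (b1:ℝ) < Real.sqrt (D:ℝ))
    (h2 : abs (Real.sqrt (D:ℝ) - 2*|(m:ℝ)|) < (b2:ℝ)) (h2s : (b2:ℝ) < Real.sqrt (D:ℝ))
    (hdvd : 2*m ∣ b1 - b2) : b1 = b2 := by
  have e1 := (abs_lt.mp h1).2
  have e2 := (abs_lt.mp h2).2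
  have hR : |(b1:ℝ) - (b2:ℝ)| < 2*|(m:ℝ)| := abs_lt.mpr ⟨by linarith, by linarith⟩
  have hZ : |b1 - b2| < |2*m| := by
    have h1' : ((|b1 - b2| : ℤ) : ℝ) < ((|2*m| : ℤ) : ℝ) := by
      push_cast
      rw [abs_mul]
      simpa using hR
    exact_mod_cast h1'
  have := Int.eq_zero_of_abs_lt_dvd ((abs_dvd _ _).mpr hdvd) hZ
  omega

private lemma uniqL (D : ℤ) (hD : 0 < D) (H f₁ f₂ : ℤ × ℤ × ℤ) (hne : H.1 ≠ 0)
    (hf₁ : IsReducedForm D f₁) (hf₂ : IsReducedForm D f₂)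
    (adj₁ : AdjRight D f₁ H) (adj₂ : AdjRight D f₂ H) : f₁ = f₂ := by
  obtain ⟨a1, b1, c1⟩ := f₁
  obtain ⟨a2, b2, c2⟩ := f₂
  have hc1 : c1 = H.1 := adj₁.2.2.1
  have hc2 : c2 = H.1 := adj₂.2.2.1
  subst hc1
  rw [red_iff' D _ _ _ hD] at hf₁ hf₂
  have hb : b1 = b2 := by
    refine b_eq D H.1 b1 b2 hne ?_ hf₁.2.2 ?_ hf₂.2.2 ?_
    · exact hf₁.2.1
    · rw [← hc2]; exact hf₂.2.1
    · have d1 := adj₁.2.2.2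
      have d2 := adj₂.2.2.2
      have : 2 * H.1 ∣ (b1 + H.2.1) - (b2 + H.2.1) := dvd_sub d1 d2
      simpa using this
  have hd1 : b1^2 - 4*a1*H.1 = D := by simpa [disc] using hf₁.1
  have hd2 : b2^2 - 4*a2*c2 = D := by simpa [disc] using hf₂.1
  have ha : a1 = a2 := by
    rw [hc2] at hd2
    subst hb
    have h4 : 4 * H.1 * a1 = 4 * H.1 * a2 := by linarith
    exact mul_left_cancel₀ (mul_ne_zero (by norm_num) hne) h4
  simp [ha, hb, hc2]

private lemma uniqR (D : ℤ) (hD : 0 < D) (F g₁ g₂ : ℤ × ℤ × ℤ) (hne : F.2.2 ≠ 0)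
    (hg₁ : IsReducedForm D g₁) (hg₂ : IsReducedForm D g₂)
    (adj₁ : AdjRight D F g₁) (adj₂ : AdjRight D F g₂) : g₁ = g₂ := by
  obtain ⟨a1, b1, c1⟩ := g₁
  obtain ⟨a2, b2, c2⟩ := g₂
  have ha1 : F.2.2 = a1 := adj₁.2.2.1
  have ha2 : F.2.2 = a2 := adj₂.2.2.1
  have haa : a2 = a1 := by rw [← ha1, ← ha2]
  subst haa
  have hb : b1 = b2 := by
    refine b_eq D a2 b1 b2 (ha1 ▸ hne) hg₁.2.1 hg₁.2.2 hg₂.2.1 hg₂.2.2 ?_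
    have d1 := adj₁.2.2.2
    have d2 := adj₂.2.2.2
    rw [← ha1] at d1 d2 ⊢
    have : 2 * F.2.2 ∣ (F.2.1 + b1) - (F.2.1 + b2) := dvd_sub d1 d2
    simpa using this
  have hd1 : b1^2 - 4*a2*c1 = D := by simpa [disc] using hg₁.1
  have hd2 : b2^2 - 4*a2*c2 = D := by simpa [disc] using hg₂.1
  have ha2ne : a2 ≠ 0 := ha2 ▸ hne
  have hc : c1 = c2 := by
    subst hb
    have h4 : 4 * a2 * c1 = 4 * a2 * c2 := by linarith
    exact mul_left_cancel₀ (mul_ne_zero (by norm_num) ha2ne) h4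
  rw [hb, hc]

private lemma red_ne (D : ℤ) (hD : 0 < D) (f : ℤ × ℤ × ℤ) (h : IsReducedForm D f) :
    f.1 ≠ 0 ∧ f.2.2 ≠ 0 := by
  obtain ⟨hd, h1, h2⟩ := h
  have hb0 : 0 < (f.2.1 : ℝ) := lt_of_le_of_lt (abs_nonneg _) h1
  have hdisc : f.2.1^2 - 4*f.1*f.2.2 = D := by simpa [disc] using hd
  have hac := ac_neg D f.1 f.2.1 f.2.2 hD hdisc hb0 h2
  constructor <;> rintro h0 <;> rw [h0] at hac <;> simp at hac

theorem stmt_13 (D : ℤ) (hD : 0 < D) (hDsq : ¬ IsSquare D)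
    (ρ : {f : ℤ × ℤ × ℤ // IsReducedForm D f} → {f : ℤ × ℤ × ℤ // IsReducedForm D f})
    (hρ : ∀ f : {f : ℤ × ℤ × ℤ // IsReducedForm D f}, AdjRight D f.1 (ρ f).1) :
    Function.Bijective ρ := by
  constructor
  · intro f g hfg
    apply Subtype.ext
    refine uniqL D hD (ρ f).1 f.1 g.1 (red_ne D hD _ (ρ f).2).1 f.2 g.2 (hρ f) ?_
    rw [hfg]; exact hρ g
  · rintro ⟨⟨a2, b2, c2⟩, hred⟩
    set s := Real.sqrt (D:ℝ) with hs
    have hs2 : s^2 = (D:ℝ) := sqrt_sq' D hD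
    have hb2pos : 0 < (b2:ℝ) := lt_of_le_of_lt (abs_nonneg _) hred.2.1
    have hb2s : (b2:ℝ) < s := hred.2.2
    have hdisc2 : b2^2 - 4*a2*c2 = D := by simpa [disc] using hred.1
    have hac : a2 * c2 < 0 := ac_neg D a2 b2 c2 hD hdisc2 hb2pos hb2s
    have ha2 : a2 ≠ 0 := by rintro rfl; simp at hac
    set M : ℤ := 2 * |a2| with hM
    have hMpos : 0 < M := by have := abs_pos.mpr ha2; omega
    have hMR : (M:ℝ) = 2*|(a2:ℝ)| := by push_cast [hM]; ring
    have hlow : 2*|(a2:ℝ)| - s < b2 := by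
      have := (abs_lt.mp hred.2.1).1; linarith
    set t : ℤ := M - b2 with ht
    have htR : (t:ℝ) = (M:ℝ) - b2 := by push_cast [ht]; ring
    have hts : (t:ℝ) < s := by rw [htR, hMR]; linarith
    set k : ℤ := ⌊(s - (t:ℝ))/(M:ℝ)⌋ with hk
    have hMRpos : (0:ℝ) < (M:ℝ) := by exact_mod_cast hMpos
    have hk0 : 0 ≤ k := Int.floor_nonneg.mpr (div_nonneg (by linarith) hMRpos.le)
    set b1 : ℤ := t + M*k with hb1
    have hb1R : (b1:ℝ) = (t:ℝ) + (M:ℝ)*(k:ℝ) := by push_cast [hb1]; ring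
    have hb1le : (b1:ℝ) ≤ s := by
      have h := Int.floor_le ((s - (t:ℝ))/(M:ℝ))
      rw [← hk] at h
      have h2 := (le_div_iff₀ hMRpos).mp h
      rw [hb1R]; linarith
    have hb1ne : (b1:ℝ) ≠ s := by
      intro he
      apply hDsq
      refine ⟨b1, ?_⟩
      have : ((b1*b1 : ℤ):ℝ) = (D:ℝ) := by push_cast; nlinarith [he, hs2]
      exact_mod_cast this.symm
    have hb1lt : (b1:ℝ) < s := lt_of_le_of_ne hb1le hb1ne
    have hb1gt : s - (M:ℝ) < (b1:ℝ) := by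
      have h := Int.lt_floor_add_one ((s - (t:ℝ))/(M:ℝ))
      rw [← hk] at h
      have h2 := (div_lt_iff₀ hMRpos).mp h
      rw [hb1R]; push_cast at h2 ⊢; nlinarith
    have hb1get : (t:ℝ) ≤ (b1:ℝ) := by
      rw [hb1R]
      have : (0:ℝ) ≤ (M:ℝ)*(k:ℝ) := mul_nonneg hMRpos.le (by exact_mod_cast hk0)
      linarith
    have habs1 : abs (s - 2*|(a2:ℝ)|) < (b1:ℝ) := by
      rw [abs_lt]
      constructor
      · rw [← hMR]
        have : (M:ℝ) - s < (b1:ℝ) := by rw [htR] at hb1get; linarith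
        linarith
      · rw [← hMR]; linarith
    have hb1b2 : b1 + b2 = M * (k+1) := by rw [hb1, ht]; ring
    have hdvd2 : 2*a2 ∣ b1 + b2 := by
      rw [hb1b2, hM]
      rcases abs_choice a2 with h | h <;> rw [h]
      · exact ⟨k+1, by ring⟩
      · exact ⟨-(k+1), by ring⟩
    have heven : (2:ℤ) ∣ b1 - b2 := by
      have h2 : (2:ℤ) ∣ b1 + b2 := dvd_trans ⟨a2, by ring⟩ hdvd2
      omega
    have hdvd4 : 4*a2 ∣ b1^2 - D := by
      have h1 : 4*a2 ∣ (b1+b2)*(b1-b2) := by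
        have hmm := mul_dvd_mul hdvd2 heven
        have e : (2*a2)*2 = 4*a2 := by ring
        rwa [e] at hmm
      have h2 : 4*a2 ∣ b2^2 - D := ⟨c2, by linarith⟩
      have e : b1^2 - D = (b1+b2)*(b1-b2) + (b2^2 - D) := by ring
      rw [e]; exact dvd_add h1 h2
    clear_value b1 k t M
    set a1 : ℤ := (b1^2 - D) / (4*a2) with ha1
    have ha1e : 4*a2*a1 = b1^2 - D := by rw [ha1]; exact Int.mul_ediv_cancel' hdvd4
    clear_value a1
    have hdisc1 : disc (a1, b1, a2) = D := by
      show b1^2 - 4*a1*a2 = D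
      linear_combination -ha1e
    have hfred : IsReducedForm D (a1, b1, a2) := by
      rw [red_iff' D a1 b1 a2 hD]
      exact ⟨hdisc1, habs1, hb1lt⟩
    have hadj : AdjRight D (a1, b1, a2) (a2, b2, c2) :=
      ⟨hdisc1, hred.1, rfl, by simpa using hdvd2⟩
    refine ⟨⟨(a1, b1, a2), hfred⟩, Subtype.ext ?_⟩
    exact uniqR D hD (a1, b1, a2) (ρ ⟨(a1, b1, a2), hfred⟩).1 (a2, b2, c2)
      (by simpa using ha2) (ρ _).2 hred (hρ ⟨(a1, b1, a2), hfred⟩) hadj
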